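/- arXiv:1912.07585 — 2 statements merged into one kernel-verified Lean document; each statement's English description precedes it below -/
import Mathlib

section
/- Let φ ∈ L²(ℝ) be a unit vector, let p = |φ⟩⟨φ| and q = 1 − p on L²(ℝ), and on L²(ℝ^N) let p_j, q_j denote the corresponding operators acting in the j-th variable. Define, for k ∈ {0,…,N}, P_k := Σ over subsets S ⊆ {1,…,N} of cardinality k of (∏_{j∈S} q_j)(∏_{j∉S} p_j). Then: (i) each P_k is an orthogonal projection; (ii) P_k P_l = 0 for k ≠ l; (iii) Σ_{k=0}^N P_k is the identity on L²(ℝ^N); and (iv) Σ_{j=1}^N q_j P_k = k·P_k for every k. -/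
section aux

variable {A : Type*} [Ring A] {ι : Type*} [DecidableEq ι]

/-- Product of a list with a zero entry is zero. -/
lemma aux_prod_zero (g : ι → A) :
    ∀ l : List ι, ∀ i ∈ l, g i = 0 → (l.map g).prod = 0 := by
  intro l
  induction l with
  | nil => simp
  | cons a t ih =>
    intro i hi h0
    simp only [List.map_cons, List.prod_cons]
    rcases List.mem_cons.mp hi with rfl | hit
    · rw [h0, zero_mul]
    · rw [ih i hit h0, mul_zero]

/-- Multiply two products over the same list pointwise, given commutation. -/
lemma aux_prod_mul (g h : ι → A) (hgh : ∀ i j, Commute (g i) (h j)) :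
    ∀ l : List ι, (l.map g).prod * (l.map h).prod = (l.map fun i => g i * h i).prod := by
  intro l
  induction l with
  | nil => simp
  | cons a t ih =>
    simp only [List.map_cons, List.prod_cons]
    have hc : Commute ((t.map g).prod) (h a) := by
      apply Commute.list_prod_left
      intro x hx
      obtain ⟨i, _, rfl⟩ := List.mem_map.mp hx
      exact hgh i a
    calc g a * (t.map g).prod * (h a * (t.map h).prod)
        = g a * (((t.map g).prod * h a) * (t.map h).prod) := by
          rw [mul_assoc, mul_assoc]
      _ = g a * (h a * ((t.map g).prod * (t.map h).prod)) := by
          rw [hc.eq, mul_assoc]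
      _ = (g a * h a) * ((t.map (fun i => g i * h i)).prod) := by
          rw [ih, mul_assoc]

lemma aux_star_prod [StarRing A] (g : ι → A) (hg : ∀ i, star (g i) = g i)
    (hc : ∀ i j, Commute (g i) (g j)) :
    ∀ l : List ι, star ((l.map g).prod) = (l.map g).prod := by
  intro l
  induction l with
  | nil => simp
  | cons a t ih =>
    simp only [List.map_cons, List.prod_cons, star_mul, ih, hg]
    have : Commute ((t.map g).prod) (g a) := by
      apply Commute.list_prod_left
      intro x hx
      obtain ⟨i, _, rfl⟩ := List.mem_map.mp hx
      exact hc i a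
    exact this.eq

lemma aux_sum_powerset (p : ι → A) :
    ∀ l : List ι, l.Nodup →
      ∑ S ∈ l.toFinset.powerset,
        (l.map (fun j => if j ∈ S then 1 - p j else p j)).prod = 1 := by
  intro l
  induction l with
  | nil => simp
  | cons a t ih =>
    intro hnd
    rw [List.nodup_cons] at hnd
    obtain ⟨ha, hnd⟩ := hnd
    have ha' : a ∉ t.toFinset := by simpa using ha
    rw [List.toFinset_cons, Finset.powerset_insert, Finset.sum_union]
    · have h1 : ∀ S ∈ t.toFinset.powerset,
          ((a :: t).map (fun j => if j ∈ S then 1 - p j else p j)).prod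
            = p a * (t.map (fun j => if j ∈ S then 1 - p j else p j)).prod := by
        intro S hS
        have haS : a ∉ S := fun h => ha' (Finset.mem_powerset.mp hS h)
        simp [List.map_cons, haS]
      have h2 : ∀ S ∈ t.toFinset.powerset,
          ((a :: t).map (fun j => if j ∈ insert a S then 1 - p j else p j)).prod
            = (1 - p a) * (t.map (fun j => if j ∈ S then 1 - p j else p j)).prod := by
        intro S hS
        simp only [List.map_cons, List.prod_cons]
        rw [if_pos (Finset.mem_insert_self a S)]
        congr 1
        exact congrArg List.prod (List.map_congr_left (fun j hj => by
          have hja : j ≠ a := fun h => ha (h ▸ hj)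
          simp [Finset.mem_insert, hja]))
      rw [Finset.sum_congr rfl h1, Finset.sum_image, Finset.sum_congr rfl h2,
        ← Finset.sum_add_distrib]
      · have : ∀ S ∈ t.toFinset.powerset,
            p a * (t.map (fun j => if j ∈ S then 1 - p j else p j)).prod
              + (1 - p a) * (t.map (fun j => if j ∈ S then 1 - p j else p j)).prod
            = (t.map (fun j => if j ∈ S then 1 - p j else p j)).prod := by
          intro S _
          rw [← add_mul]
          simp
        rw [Finset.sum_congr rfl this, ih hnd]
      · intro S hS T hT hST
        have haS : a ∉ S := fun h => ha' (Finset.mem_powerset.mp hS h)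
        have haT : a ∉ T := fun h => ha' (Finset.mem_powerset.mp hT h)
        ext x
        constructor
        · intro hx
          have := Finset.ext_iff.mp hST x
          rcases Finset.mem_insert.mp (this.mp (Finset.mem_insert_of_mem hx)) with rfl | h
          · exact absurd hx haS
          · exact h
        · intro hx
          have := Finset.ext_iff.mp hST x
          rcases Finset.mem_insert.mp (this.mpr (Finset.mem_insert_of_mem hx)) with rfl | h
          · exact absurd hx haT
          · exact h
    · rw [Finset.disjoint_left]
      intro S hS hS'
      obtain ⟨T, _, rfl⟩ := Finset.mem_image.mp hS'
      exact ha' (Finset.mem_powerset.mp hS (Finset.mem_insert_self a T))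

lemma aux_mul_prod (g : ι → A) (a : A) (hc : ∀ j, Commute a (g j)) :
    ∀ l : List ι, l.Nodup → ∀ i ∈ l,
      a * (l.map g).prod = (l.map fun j => if j = i then a * g j else g j).prod := by
  intro l
  induction l with
  | nil => simp
  | cons b t ih =>
    intro hnd i hi
    rw [List.nodup_cons] at hnd
    obtain ⟨hb, hnd⟩ := hnd
    simp only [List.map_cons, List.prod_cons]
    by_cases hbi : b = i
    · subst hbi
      rw [← mul_assoc, if_pos rfl]
      congr 1
      exact congrArg List.prod (List.map_congr_left (fun j hj => by
        have hjb : ¬ (j = b) := fun h => hb (h ▸ hj)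
        rw [if_neg hjb])).symm
    · have hit : i ∈ t := by
        rcases List.mem_cons.mp hi with h | h
        · exact absurd h.symm hbi
        · exact h
      rw [← mul_assoc, (hc b).eq, mul_assoc, ih hnd i hit, if_neg hbi]

end aux

/-- Properties of the Pickl projections `P_k`. Abstractly, on a Hilbert space `E`
(such as `L²(ℝ^N)`), let `p_j` be commuting orthogonal projections (such as the
projections `|φ⟩⟨φ|` acting in the `j`-th variable), `q_j = 1 − p_j`, and
`P_k = Σ_{|S| = k} (∏_{j∈S} q_j)(∏_{j∉S} p_j)`. Then: (i) each `P_k` is an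
orthogonal projection; (ii) `P_k P_l = 0` for `k ≠ l`; (iii) `Σ_{k=0}^N P_k = 1`;
(iv) `Σ_j q_j P_k = k P_k`. -/
theorem pickl_projection_properties {E : Type*} [NormedAddCommGroup E]
    [InnerProductSpace ℂ E] [CompleteSpace E]
    (N : ℕ) (p : Fin N → E →L[ℂ] E)
    (hidem : ∀ j, IsIdempotentElem (p j))
    (hsa : ∀ j, IsSelfAdjoint (p j))
    (hcomm : ∀ i j, Commute (p i) (p j))
    (P : ℕ → E →L[ℂ] E)
    (hP : ∀ k, P k = ∑ S ∈ Finset.powersetCard k (Finset.univ : Finset (Fin N)),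
        ((List.finRange N).map (fun j => if j ∈ S then 1 - p j else p j)).prod) :
    (∀ k, IsIdempotentElem (P k) ∧ IsSelfAdjoint (P k)) ∧
    (∀ k l, k ≠ l → P k * P l = 0) ∧
    (∑ k ∈ Finset.range (N + 1), P k = 1) ∧
    (∀ k, (∑ j, (1 - p j)) * P k = (k : ℂ) • P k) := by
  classical
  set f : Finset (Fin N) → Fin N → (E →L[ℂ] E) :=
    fun S j => if j ∈ S then 1 - p j else p j with hf
  set Q : Finset (Fin N) → (E →L[ℂ] E) := fun S => ((List.finRange N).map (f S)).prod with hQ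
  have hPQ : ∀ k, P k = ∑ S ∈ Finset.powersetCard k (Finset.univ : Finset (Fin N)), Q S :=
    fun k => hP k
  -- commutation of all factors
  have hcf : ∀ S T i j, Commute (f S i) (f T j) := by
    intro S T i j
    simp only [hf]
    have h := hcomm i j
    split_ifs
    · exact Commute.sub_right (Commute.one_right _) (Commute.sub_left (Commute.one_left _) h) |>.symm.symm
    · exact Commute.sub_left (Commute.one_left _) h
    · exact Commute.sub_right (Commute.one_right _) h
    · exact h
  -- pointwise product of factors
  have hff : ∀ S i, f S i * f S i = f S i := by
    intro S i
    simp only [hf]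
    split_ifs
    · exact (hidem i).one_sub
    · exact hidem i
  have hqp : ∀ i, (1 - p i) * p i = 0 := by
    intro i
    rw [sub_mul, one_mul, (hidem i), sub_self]
  have hpq : ∀ i, p i * (1 - p i) = 0 := by
    intro i
    rw [mul_sub, mul_one, (hidem i), sub_self]
  -- Q S * Q T
  have hmul : ∀ S T, Q S * Q T = if S = T then Q S else 0 := by
    intro S T
    rw [hQ]
    simp only
    rw [aux_prod_mul (f S) (f T) (fun i j => hcf S T i j)]
    by_cases hST : S = T
    · subst hST
      rw [if_pos rfl]
      congr 1
      apply List.map_congr_left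
      intro j _
      exact hff S j
    · rw [if_neg hST]
      have : ∃ i, (i ∈ S) ≠ (i ∈ T) := by
        by_contra h
        push_neg at h
        exact hST (Finset.ext fun i => by
          have := h i
          constructor <;> intro hx <;> simp_all)
      obtain ⟨i, hi⟩ := this
      apply aux_prod_zero _ _ i (List.mem_finRange i)
      simp only [hf]
      by_cases h1 : i ∈ S <;> by_cases h2 : i ∈ T <;> simp_all [hqp, hpq]
  have hQidem : ∀ S, Q S * Q S = Q S := fun S => by rw [hmul, if_pos rfl]
  have hQstar : ∀ S, star (Q S) = Q S := by
    intro S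
    apply aux_star_prod (f S) _ (fun i j => hcf S S i j)
    intro i
    simp only [hf]
    split_ifs
    · rw [star_sub, star_one, (hsa i)]
    · exact hsa i
  -- q_j * Q S
  have hqc : ∀ (j : Fin N) S (i : Fin N), Commute (1 - p j) (f S i) := by
    intro j S i
    simp only [hf]
    split_ifs
    · exact Commute.sub_right (Commute.one_right _) (Commute.sub_left (Commute.one_left _) (hcomm j i)) |>.symm.symm
    · exact Commute.sub_left (Commute.one_left _) (hcomm j i)
  have hqQ : ∀ (j : Fin N) S, (1 - p j) * Q S = if j ∈ S then Q S else 0 := by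
    intro j S
    rw [hQ]
    simp only
    rw [aux_mul_prod (f S) (1 - p j) (hqc j S) _ (List.nodup_finRange N) j
      (List.mem_finRange j)]
    by_cases hjS : j ∈ S
    · rw [if_pos hjS]
      apply congrArg List.prod
      apply List.map_congr_left
      intro x hx
      by_cases hxj : x = j
      · subst hxj
        rw [if_pos rfl]
        simp only [hf, if_pos hjS]
        exact (hidem x).one_sub
      · rw [if_neg hxj]
    · rw [if_neg hjS]
      apply aux_prod_zero _ _ j (List.mem_finRange j)
      rw [if_pos rfl]
      simp only [hf, if_neg hjS]
      exact hqp j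
  refine ⟨?_, ?_, ?_, ?_⟩
  · intro k
    constructor
    · show P k * P k = P k
      rw [hPQ k, Finset.sum_mul_sum]
      have h1 : ∀ S ∈ Finset.powersetCard k (Finset.univ : Finset (Fin N)),
          ∑ T ∈ Finset.powersetCard k (Finset.univ : Finset (Fin N)), Q S * Q T = Q S := by
        intro S hS
        rw [Finset.sum_congr rfl (fun T _ => hmul S T)]
        simp [Finset.sum_ite_eq, hS]
      rw [Finset.sum_congr rfl h1]
    · show star (P k) = P k
      rw [hPQ k, star_sum]
      exact Finset.sum_congr rfl (fun S _ => hQstar S)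
  · intro k l hkl
    rw [hPQ k, hPQ l, Finset.sum_mul_sum]
    apply Finset.sum_eq_zero
    intro S hS
    apply Finset.sum_eq_zero
    intro T hT
    rw [hmul, if_neg]
    rintro rfl
    exact hkl (((Finset.mem_powersetCard.mp hS).2.symm).trans
      (Finset.mem_powersetCard.mp hT).2)
  · have h := aux_sum_powerset p (List.finRange N) (List.nodup_finRange N)
    rw [List.toFinset_finRange] at h
    calc ∑ k ∈ Finset.range (N + 1), P k
        = ∑ S ∈ (Finset.univ : Finset (Fin N)).powerset, Q S := by
          rw [Finset.powerset_card_disjiUnion]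
          erw [Finset.sum_disjiUnion]
          rw [Finset.card_univ, Fintype.card_fin]
          exact Finset.sum_congr rfl (fun k _ => hPQ k)
      _ = 1 := h
  · intro k
    rw [hPQ k, Finset.sum_mul_sum, Finset.sum_comm]
    have h1 : ∀ S ∈ Finset.powersetCard k (Finset.univ : Finset (Fin N)),
        ∑ j : Fin N, (1 - p j) * Q S = (k : ℂ) • Q S := by
      intro S hS
      rw [Finset.sum_congr rfl (fun j _ => hqQ j S), Finset.sum_ite_mem,
        Finset.univ_inter, Finset.sum_const, (Finset.mem_powersetCard.mp hS).2]
      exact (Nat.cast_smul_eq_nsmul ℂ k (Q S)).symm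
    rw [Finset.sum_congr rfl h1, ← Finset.smul_sum]
end

section
/- In the setting of the previous statement, for every Φ ∈ L²_{sym}(ℝ^N) with N ≥ 2: ‖f̂^{1/2} q_1 q_2 Φ‖² = ⟨Φ, f̂ q_1 q_2 Φ⟩ ≤ (N/(N−1))·⟨Φ, f̂ m̂_N² Φ⟩, where m̂_N² = Σ_k (k/N)² P_k. -/
lemma proj_inner_aux {E : Type*} [NormedAddCommGroup E] [InnerProductSpace ℂ E] [CompleteSpace E]
    (A : E →L[ℂ] E) (hA : IsSelfAdjoint A) (h2 : IsIdempotentElem A) (x : E) :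
    (inner ℂ x (A x) : ℂ) = ((‖A x‖^2 : ℝ) : ℂ) := by
  have h : (inner ℂ x (A x) : ℂ) = inner ℂ (A x) (A x) := by
    conv_lhs => rw [show A x = A (A x) from by rw [← ContinuousLinearMap.mul_apply, h2.eq]]
    rw [← ContinuousLinearMap.adjoint_inner_left, ← ContinuousLinearMap.star_eq_adjoint, hA.star_eq]
  rw [h, inner_self_eq_norm_sq_to_K]
  norm_cast

lemma sumP_mul {R : Type*} [Ring R] [Algebra ℂ R] (n : ℕ) (P : ℕ → R)
    (hPidem : ∀ k, IsIdempotentElem (P k))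
    (horth : ∀ k l, k ≠ l → P k * P l = 0) (a b : ℕ → ℂ) :
    (∑ k ∈ Finset.range n, a k • P k) * (∑ k ∈ Finset.range n, b k • P k)
      = ∑ k ∈ Finset.range n, (a k * b k) • P k := by
  rw [Finset.sum_mul_sum]
  refine Finset.sum_congr rfl fun k hk => ?_
  rw [Finset.sum_eq_single k]
  · rw [smul_mul_assoc, mul_smul_comm, smul_smul, (hPidem k).eq]
  · intro l _ hlk
    rw [smul_mul_assoc, mul_smul_comm, horth k l (Ne.symm hlk), smul_zero, smul_zero]
  · intro h; exact absurd hk h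

/-- Knowles–Pickl Lemma 3.9(ii) in the Pickl projection formalism: for `f ≥ 0`,
`N ≥ 2`, and symmetric `Φ`,
`‖f̂^{1/2} q_1 q_2 Φ‖² = ⟨Φ, f̂ q_1 q_2 Φ⟩ ≤ (N/(N−1)) ⟨Φ, f̂ m̂_N² Φ⟩`,
where `f̂ = Σ_{k=0}^N f(k) P_k`, `f̂^{1/2} = Σ_k √(f(k)) P_k`, and
`m̂_N = Σ_k (k/N) P_k`. -/
theorem fhat_q1q2_inequality {E : Type*} [NormedAddCommGroup E] [InnerProductSpace ℂ E]
    [CompleteSpace E] (N : ℕ) (hN : 2 ≤ N)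
    (q : Fin N → E →L[ℂ] E) (P : ℕ → E →L[ℂ] E)
    (hqsa : ∀ j, IsSelfAdjoint (q j)) (hqidem : ∀ j, IsIdempotentElem (q j))
    (hqq : ∀ i j, Commute (q i) (q j))
    (hPsa : ∀ k, IsSelfAdjoint (P k)) (hPidem : ∀ k, IsIdempotentElem (P k))
    (horth : ∀ k l, k ≠ l → P k * P l = 0)
    (hPsum : ∑ k ∈ Finset.range (N + 1), P k = 1)
    (hqP : ∀ j k, Commute (q j) (P k))
    (hcount : ∀ k, (∑ j, q j) * P k = (k : ℂ) • P k)
    (f : ℕ → ℝ) (hf : ∀ k, 0 ≤ f k)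
    (Φ : E)
    (hsym2 : ∀ (a b a' b' : Fin N), a ≠ b → a' ≠ b' → ∀ k : ℕ,
      (inner ℂ Φ ((P k * (q a * q b)) Φ) : ℂ) = inner ℂ Φ ((P k * (q a' * q b')) Φ))
    (i j : Fin N) (hij : i ≠ j) :
    (‖(∑ k ∈ Finset.range (N + 1), ((Real.sqrt (f k) : ℂ)) • P k) ((q i) ((q j) Φ))‖ ^ 2 : ℝ)
        = (inner ℂ Φ ((∑ k ∈ Finset.range (N + 1), ((f k : ℂ)) • P k) ((q i) ((q j) Φ))) : ℂ).re ∧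
    ((inner ℂ Φ ((∑ k ∈ Finset.range (N + 1), ((f k : ℂ)) • P k) ((q i) ((q j) Φ))) : ℂ).re
        ≤ ((N : ℝ) / ((N : ℝ) - 1)) *
          (inner ℂ Φ (((∑ k ∈ Finset.range (N + 1), ((f k : ℂ)) • P k)
            * ((∑ k ∈ Finset.range (N + 1), ((k : ℂ) / N) • P k)
              * (∑ k ∈ Finset.range (N + 1), ((k : ℂ) / N) • P k))) Φ) : ℂ).re) := by
  set ψ : E := (q i) ((q j) Φ) with hψdef
  set F : E →L[ℂ] E := ∑ k ∈ Finset.range (N + 1), ((f k : ℂ)) • P k with hFdef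
  set G : E →L[ℂ] E := ∑ k ∈ Finset.range (N + 1), ((Real.sqrt (f k) : ℂ)) • P k with hGdef
  set M : E →L[ℂ] E := ∑ k ∈ Finset.range (N + 1), ((k : ℂ) / N) • P k with hMdef
  have hqqc : Commute (q i) (q j) := hqq i j
  have hcPij : ∀ k, Commute (P k) (q i * q j) :=
    fun k => ((hqP i k).symm).mul_right ((hqP j k).symm)
  have hAsa : ∀ k, IsSelfAdjoint (P k * (q i * q j)) := by
    intro k
    rw [IsSelfAdjoint, star_mul, star_mul, (hPsa k).star_eq, (hqsa i).star_eq, (hqsa j).star_eq]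
    rw [← hqqc.eq, (hcPij k).eq]
  have hAidem : ∀ k, IsIdempotentElem (P k * (q i * q j)) :=
    fun k => (hPidem k).mul_of_commute (hcPij k)
      (((hqidem i).mul_of_commute hqqc (hqidem j)))
  have hPψ : ∀ k, P k ψ = (P k * (q i * q j)) Φ := by
    intro k; simp [ContinuousLinearMap.mul_apply, hψdef]
  set c : ℕ → ℝ := fun k => ‖P k ψ‖ ^ 2 with hcdef
  set p : ℕ → ℝ := fun k => ‖P k Φ‖ ^ 2 with hpdef
  have keyψ : ∀ k, (inner ℂ ψ (P k ψ) : ℂ) = ((c k : ℝ) : ℂ) :=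
    fun k => proj_inner_aux (P k) (hPsa k) (hPidem k) ψ
  have keyΦ : ∀ k, (inner ℂ Φ (P k Φ) : ℂ) = ((p k : ℝ) : ℂ) :=
    fun k => proj_inner_aux (P k) (hPsa k) (hPidem k) Φ
  have key1 : ∀ k, (inner ℂ Φ (P k ψ) : ℂ) = ((c k : ℝ) : ℂ) := by
    intro k
    rw [hPψ k, proj_inner_aux _ (hAsa k) (hAidem k) Φ]
    simp only [hcdef]
    rw [hPψ k]
  have hFψre : (inner ℂ Φ (F ψ) : ℂ).re = ∑ k ∈ Finset.range (N + 1), f k * c k := by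
    rw [hFdef]
    simp only [ContinuousLinearMap.sum_apply, ContinuousLinearMap.smul_apply, inner_sum,
      inner_smul_right]
    rw [Complex.re_sum]
    refine Finset.sum_congr rfl fun k _ => ?_
    rw [key1 k, ← Complex.ofReal_mul, Complex.ofReal_re]
  constructor
  · -- part (i): norm identity
    have hGG : G * G = F := by
      rw [hGdef, hFdef, sumP_mul (N+1) P hPidem horth]
      refine Finset.sum_congr rfl fun k _ => ?_
      rw [← Complex.ofReal_mul, Real.mul_self_sqrt (hf k)]
    have hGsa : IsSelfAdjoint G := by
      rw [hGdef, IsSelfAdjoint, star_sum]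
      refine Finset.sum_congr rfl fun k _ => ?_
      rw [star_smul, (hPsa k).star_eq, Complex.star_def, Complex.conj_ofReal]
    have hadj : ContinuousLinearMap.adjoint G = G := by
      rw [← ContinuousLinearMap.star_eq_adjoint, hGsa.star_eq]
    have h1 : (inner ℂ (G ψ) (G ψ) : ℂ) = inner ℂ ψ (F ψ) := by
      rw [← hadj, ContinuousLinearMap.adjoint_inner_left, hadj,
        ← ContinuousLinearMap.mul_apply, hGG]
    have h2 : (inner ℂ ψ (F ψ) : ℂ).re = ∑ k ∈ Finset.range (N + 1), f k * c k := by
      rw [hFdef]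
      simp only [ContinuousLinearMap.sum_apply, ContinuousLinearMap.smul_apply, inner_sum,
        inner_smul_right]
      rw [Complex.re_sum]
      refine Finset.sum_congr rfl fun k _ => ?_
      rw [keyψ k, ← Complex.ofReal_mul, Complex.ofReal_re]
    have hnorm : (‖G ψ‖ ^ 2 : ℝ) = (inner ℂ (G ψ) (G ψ) : ℂ).re := by
      rw [inner_self_eq_norm_sq_to_K]
      simp [← Complex.ofReal_pow]
    rw [hnorm, h1, h2, hFψre]
  · -- part (ii): the inequality
    have hkey : ∀ k, ((N*N - N : ℕ) : ℂ) * ((c k : ℝ) : ℂ)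
        = ((k:ℂ)^2 - (k:ℂ)) * ((p k : ℝ) : ℂ) := by
      intro k
      have hPQ : Commute (P k) (∑ x, q x) :=
        Commute.sum_right _ _ _ (fun x _ => (hqP x k).symm)
      have h1 : P k * (∑ x, q x) = (k:ℂ) • P k := by rw [hPQ.eq, hcount k]
      have h2 : P k * ((∑ x, q x) * (∑ x, q x)) = ((k:ℂ)^2) • P k := by
        rw [← mul_assoc, h1, smul_mul_assoc, h1, smul_smul, ← sq]
      have hS : (∑ x, q x) * (∑ x, q x)
          = (∑ x, q x) + ∑ pr ∈ (Finset.univ : Finset (Fin N)).offDiag, q pr.1 * q pr.2 := by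
        rw [Finset.sum_mul_sum, ← Finset.sum_product', ← Finset.diag_union_offDiag,
          Finset.sum_union (Finset.disjoint_diag_offDiag _), Finset.sum_diag]
        congr 1
        exact Finset.sum_congr rfl fun x _ => (hqidem x).eq
      have h3 : P k * (∑ pr ∈ (Finset.univ : Finset (Fin N)).offDiag, q pr.1 * q pr.2)
          = ((k:ℂ)^2 - (k:ℂ)) • P k := by
        have h4 : P k * ((∑ x, q x) * (∑ x, q x))
            = P k * (∑ x, q x) + P k * (∑ pr ∈ (Finset.univ : Finset (Fin N)).offDiag, q pr.1 * q pr.2) := by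
          rw [hS, mul_add]
        rw [h2, h1] at h4
        rw [sub_smul, eq_comm, sub_eq_iff_eq_add', ← h4]
      have h5 : ∑ pr ∈ (Finset.univ : Finset (Fin N)).offDiag,
            (inner ℂ Φ ((P k * (q pr.1 * q pr.2)) Φ) : ℂ)
          = ((Finset.univ : Finset (Fin N)).offDiag.card : ℂ)
            * inner ℂ Φ ((P k * (q i * q j)) Φ) := by
        rw [Finset.sum_congr rfl
          (fun pr hpr => hsym2 pr.1 pr.2 i j (Finset.mem_offDiag.mp hpr).2.2 hij k)]
        rw [Finset.sum_const, nsmul_eq_mul]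
      have h6 : ∑ pr ∈ (Finset.univ : Finset (Fin N)).offDiag,
            (inner ℂ Φ ((P k * (q pr.1 * q pr.2)) Φ) : ℂ)
          = inner ℂ Φ ((P k * ∑ pr ∈ (Finset.univ : Finset (Fin N)).offDiag, q pr.1 * q pr.2) Φ) := by
        rw [Finset.mul_sum]
        simp only [ContinuousLinearMap.sum_apply, inner_sum]
      have hcard : (Finset.univ : Finset (Fin N)).offDiag.card = N*N - N := by
        rw [Finset.offDiag_card]; simp [Finset.card_univ]
      have hcΦ : (inner ℂ Φ ((P k * (q i * q j)) Φ) : ℂ) = ((c k : ℝ) : ℂ) := by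
        rw [← hPψ k]; exact key1 k
      calc ((N*N - N : ℕ) : ℂ) * ((c k : ℝ) : ℂ)
          = ((Finset.univ : Finset (Fin N)).offDiag.card : ℂ)
            * inner ℂ Φ ((P k * (q i * q j)) Φ) := by rw [hcard, hcΦ]
        _ = inner ℂ Φ ((P k * ∑ pr ∈ (Finset.univ : Finset (Fin N)).offDiag, q pr.1 * q pr.2) Φ) := by
            rw [← h5, h6]
        _ = ((k:ℂ)^2 - (k:ℂ)) * ((p k : ℝ) : ℂ) := by
            rw [h3, ContinuousLinearMap.smul_apply, inner_smul_right, keyΦ k]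
    have hkeyR : ∀ k, (((N*N - N : ℕ) : ℝ)) * c k = ((k:ℝ)^2 - (k:ℝ)) * p k := by
      intro k
      exact_mod_cast hkey k
    have hFMM : F * (M * M) = ∑ k ∈ Finset.range (N + 1),
        ((f k : ℂ) * (((k:ℂ)/N) * ((k:ℂ)/N))) • P k := by
      rw [hMdef, sumP_mul (N+1) P hPidem horth, hFdef, sumP_mul (N+1) P hPidem horth]
    have hRre : (inner ℂ Φ ((F * (M * M)) Φ) : ℂ).re
        = ∑ k ∈ Finset.range (N + 1), f k * (((k:ℝ)/N) * ((k:ℝ)/N)) * p k := by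
      rw [hFMM]
      simp only [ContinuousLinearMap.sum_apply, ContinuousLinearMap.smul_apply, inner_sum,
        inner_smul_right]
      rw [Complex.re_sum]
      refine Finset.sum_congr rfl fun k _ => ?_
      rw [keyΦ k]
      have : (f k : ℂ) * (((k:ℂ)/N) * ((k:ℂ)/N)) * ((p k : ℝ) : ℂ)
          = ((f k * (((k:ℝ)/N) * ((k:ℝ)/N)) * p k : ℝ) : ℂ) := by push_cast; ring
      rw [this, Complex.ofReal_re]
    rw [hFψre, hRre, Finset.mul_sum]
    refine Finset.sum_le_sum fun k _ => ?_
    have hn2 : (2:ℝ) ≤ (N:ℝ) := by exact_mod_cast hN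
    have hn0 : (0:ℝ) < (N:ℝ) := by linarith
    have hn1 : (0:ℝ) < (N:ℝ) - 1 := by linarith
    have hpk : 0 ≤ p k := by simp only [hpdef]; positivity
    have hNNc : (((N*N - N : ℕ) : ℝ)) = (N:ℝ)*(N:ℝ) - (N:ℝ) := by
      have : N ≤ N*N := Nat.le_mul_of_pos_left N (by omega)
      push_cast [Nat.cast_sub this]
      ring
    have hk := hkeyR k
    rw [hNNc] at hk
    have hrw : (N:ℝ)/((N:ℝ)-1) * (f k * (((k:ℝ)/N) * ((k:ℝ)/N)) * p k)
        = f k * ((k:ℝ)*(k:ℝ)) * p k / (((N:ℝ)-1)*(N:ℝ)) := by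
      field_simp
    rw [hrw, le_div_iff₀ (by positivity)]
    have hk2 : f k * (((N:ℝ)*(N:ℝ) - (N:ℝ)) * c k) = f k * (((k:ℝ)^2 - (k:ℝ)) * p k) := by
      rw [hk]
    nlinarith [hk2, mul_nonneg (mul_nonneg (hf k) (Nat.cast_nonneg k : (0:ℝ) ≤ (k:ℝ))) hpk]
end
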